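/- Let q ≥ 2 be a prime power, t ≥ 2, e = ⌊log_q(t−1)⌋, f = (e+1)t − (q^{e+1}−1)/(q−1), and let K be any field. In the polynomial ring K[X^{(u)}_a : 0 ≤ u ≤ e, 0 ≤ a ≤ t−1], for each 0 ≤ u ≤ e let B_u^{(e−u)} denote the 2×(t−q^u) matrix whose first row is (X^{(e−u)}_0, X^{(e−u)}_1, …, X^{(e−u)}_{t−1−q^u}) and whose second row is (X^{(e−u)}_{q^u}, X^{(e−u)}_{q^u+1}, …, X^{(e−u)}_{t−1}), and let Φ = (B_0^{(e)} | B_1^{(e−1)} | ⋯ | B_e^{(0)}) be the resulting 2×f block matrix. Then for every nonzero row vector a ∈ K² and every nonzero row vector b ∈ K^f, the polynomial a·Φ·bᵀ is nonzero; that is, Φ is 1-generic. -/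

import Mathlib

noncomputable section

namespace Stmt3

open MvPolynomial

/-- The variable `X^{(u)}_a`, in the polynomial ring with variables indexed by
pairs `(u, a)`. -/
def Xv (K : Type) [Field K] (u a : ℕ) : MvPolynomial (ℕ × ℕ) K :=
  MvPolynomial.X (u, a)

/-- The block matrix `Φ = (B_0^{(e)} | B_1^{(e-1)} | ⋯ | B_e^{(0)})`: the column
indexed by `(u, a)` (with `0 ≤ u ≤ e`, `0 ≤ a < t - q^u`) is the `a`-th column of
`B_u^{(e-u)}`, namely `(X^{(e-u)}_a, X^{(e-u)}_{q^u + a})ᵀ`. -/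
def Phi (K : Type) [Field K] (q t e : ℕ) :
    Fin 2 → (Σ u : Fin (e + 1), Fin (t - q ^ (u : ℕ))) → MvPolynomial (ℕ × ℕ) K :=
  fun i j => if i = 0 then Xv K (e - (j.1 : ℕ)) (j.2 : ℕ)
    else Xv K (e - (j.1 : ℕ)) (q ^ (j.1 : ℕ) + (j.2 : ℕ))

/-- The matrix `Φ` is `1`-generic: the number of its columns is
`f = (e+1)t − (q^{e+1}−1)/(q−1)`, and for all nonzero row vectors `a ∈ K²`,
`b ∈ K^f`, the linear form `a·Φ·bᵀ` is nonzero. -/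
theorem syzygy_distinguisher_stmt3
    (q t e f : ℕ) (hq : IsPrimePow q) (hq2 : 2 ≤ q) (ht : 2 ≤ t)
    (he : e = Nat.log q (t - 1))
    (hf : f = (e + 1) * t - (q ^ (e + 1) - 1) / (q - 1))
    (K : Type) [Field K] :
    Fintype.card (Σ u : Fin (e + 1), Fin (t - q ^ (u : ℕ))) = f
    ∧ ∀ (a : Fin 2 → K) (b : (Σ u : Fin (e + 1), Fin (t - q ^ (u : ℕ))) → K),
        a ≠ 0 → b ≠ 0 →
        (∑ i, ∑ j, MvPolynomial.C (a i * b j) * Phi K q t e i j) ≠ 0 := by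
  classical
  constructor
  · -- cardinality
    have hpow : ∀ i ∈ Finset.range (e + 1), q ^ i ≤ t := by
      intro i hi
      have hi' : i ≤ e := by simpa [Nat.lt_succ_iff] using hi
      calc q ^ i ≤ q ^ e := Nat.pow_le_pow_right (by omega) hi'
        _ ≤ t - 1 := he ▸ Nat.pow_log_le_self q (by omega)
        _ ≤ t := by omega
    rw [Fintype.card_sigma]
    simp only [Fintype.card_fin]
    rw [Fin.sum_univ_eq_sum_range (fun u => t - q ^ u) (e + 1)]
    rw [hf, ← Nat.geomSum_eq hq2 (e + 1),
      Finset.sum_tsub_distrib _ hpow, Finset.sum_const, Finset.card_range, smul_eq_mul]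
  · intro a b ha hb hS
    -- key coefficient identity
    have key : ∀ v : ℕ × ℕ,
        (∑ j : Σ u : Fin (e + 1), Fin (t - q ^ (u : ℕ)),
          (if ((e - (j.1 : ℕ), (j.2 : ℕ)) : ℕ × ℕ) = v then a 0 * b j else 0))
        + (∑ j : Σ u : Fin (e + 1), Fin (t - q ^ (u : ℕ)),
          (if ((e - (j.1 : ℕ), q ^ (j.1 : ℕ) + (j.2 : ℕ)) : ℕ × ℕ) = v then a 1 * b j else 0))
        = 0 := by
      intro v
      have h := congrArg (MvPolynomial.coeff (Finsupp.single v 1)) hS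
      rw [coeff_zero] at h
      rw [Fin.sum_univ_two] at h
      simp only [Phi, Xv, coeff_add, coeff_sum, coeff_C_mul, coeff_X',
        Finsupp.single_left_inj (one_ne_zero (α := ℕ))] at h
      simpa using h
    -- evaluating the first-row sum at an in-range target
    have row0 : ∀ (u : Fin (e + 1)) (c : ℕ) (hc : c < t - q ^ (u : ℕ)),
        (∑ j : Σ u : Fin (e + 1), Fin (t - q ^ (u : ℕ)),
          (if ((e - (j.1 : ℕ), (j.2 : ℕ)) : ℕ × ℕ) = (e - (u : ℕ), c) then a 0 * b j else 0))
        = a 0 * b ⟨u, ⟨c, hc⟩⟩ := by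
      intro u c hc
      rw [Finset.sum_eq_single_of_mem (⟨u, ⟨c, hc⟩⟩ : Σ u : Fin (e + 1), Fin (t - q ^ (u : ℕ)))
        (Finset.mem_univ _)]
      · simp
      · rintro ⟨u', c'⟩ - hne
        rw [if_neg]
        intro hcond
        apply hne
        simp only [Prod.mk.injEq] at hcond
        have hu : u' = u := Fin.ext (by have := u'.isLt; have := u.isLt; omega)
        subst hu
        exact congrArg _ (Fin.ext (show (c' : ℕ) = c from hcond.2))
    -- second-row sum at low target is zero
    have row1_none : ∀ (u : Fin (e + 1)) (c : ℕ), c < q ^ (u : ℕ) →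
        (∑ j : Σ u : Fin (e + 1), Fin (t - q ^ (u : ℕ)),
          (if ((e - (j.1 : ℕ), q ^ (j.1 : ℕ) + (j.2 : ℕ)) : ℕ × ℕ) = (e - (u : ℕ), c)
            then a 1 * b j else 0)) = 0 := by
      intro u c hcq
      apply Finset.sum_eq_zero
      rintro ⟨u', c'⟩ -
      rw [if_neg]
      intro hcond
      simp only [Prod.mk.injEq] at hcond
      have hu : (u' : ℕ) = u := by have := u'.isLt; have := u.isLt; omega
      have hp : q ^ (u' : ℕ) = q ^ (u : ℕ) := by rw [hu]
      omega
    -- second-row sum at a shifted in-range target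
    have row1_some : ∀ (u : Fin (e + 1)) (c : ℕ) (hc : c < t - q ^ (u : ℕ)),
        (∑ j : Σ u : Fin (e + 1), Fin (t - q ^ (u : ℕ)),
          (if ((e - (j.1 : ℕ), q ^ (j.1 : ℕ) + (j.2 : ℕ)) : ℕ × ℕ) = (e - (u : ℕ), q ^ (u : ℕ) + c)
            then a 1 * b j else 0)) = a 1 * b ⟨u, ⟨c, hc⟩⟩ := by
      intro u c hc
      rw [Finset.sum_eq_single_of_mem (⟨u, ⟨c, hc⟩⟩ : Σ u : Fin (e + 1), Fin (t - q ^ (u : ℕ)))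
        (Finset.mem_univ _)]
      · simp
      · rintro ⟨u', c'⟩ - hne
        rw [if_neg]
        intro hcond
        apply hne
        simp only [Prod.mk.injEq] at hcond
        have hu : u' = u := Fin.ext (by have := u'.isLt; have := u.isLt; omega)
        subst hu
        exact congrArg _ (Fin.ext (show (c' : ℕ) = c by omega))
    -- now show b = 0, contradiction
    have hbj : ∃ j : Σ u : Fin (e + 1), Fin (t - q ^ (u : ℕ)), b j ≠ 0 := by
      by_contra hcon; push_neg at hcon; exact hb (funext hcon)
    obtain ⟨j0, hj0⟩ := hbj
    by_cases ha0 : a 0 = 0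
    · -- then a 1 ≠ 0
      have ha1 : a 1 ≠ 0 := by
        intro h1
        apply ha
        funext i
        fin_cases i <;> simp [ha0, h1]
      have hz : ∀ (u : Fin (e + 1)) (c : ℕ) (hc : c < t - q ^ (u : ℕ)), b ⟨u, ⟨c, hc⟩⟩ = 0 := by
        intro u c hc
        have hk := key (e - (u : ℕ), q ^ (u : ℕ) + c)
        rw [row1_some u c hc] at hk
        rw [Finset.sum_eq_zero (fun j _ => by rw [ha0, zero_mul, ite_self]), zero_add] at hk
        exact (mul_eq_zero.mp hk).resolve_left ha1
      exact hj0 (by rcases j0 with ⟨u, c⟩; exact hz u c c.isLt)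
    · have hz : ∀ (u : Fin (e + 1)) (c : ℕ) (hc : c < t - q ^ (u : ℕ)), b ⟨u, ⟨c, hc⟩⟩ = 0 := by
        intro u c
        induction c using Nat.strong_induction_on with
        | _ c ih =>
          intro hc
          have hk := key (e - (u : ℕ), c)
          rw [row0 u c hc] at hk
          by_cases hcq : c < q ^ (u : ℕ)
          · rw [row1_none u c hcq, add_zero] at hk
            exact (mul_eq_zero.mp hk).resolve_left ha0
          · push_neg at hcq
            have hpos : 0 < q ^ (u : ℕ) := Nat.pow_pos (by omega)
            have hc' : c - q ^ (u : ℕ) < t - q ^ (u : ℕ) := by omega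
            have h1 := row1_some u (c - q ^ (u : ℕ)) hc'
            rw [show q ^ (u : ℕ) + (c - q ^ (u : ℕ)) = c by omega] at h1
            rw [h1, ih (c - q ^ (u : ℕ)) (by omega) hc', mul_zero, add_zero] at hk
            exact (mul_eq_zero.mp hk).resolve_left ha0
      exact hj0 (by rcases j0 with ⟨u, c⟩; exact hz u c c.isLt)


end Stmt3
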